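/- The bijection φ₀ between L × ℤ and the subgroup H is equivariant: for every integer j, every label a ∈ L, and every integer i, one has φ₀(a, i + j) = Γ₀((s₁₂·s₁₃)^{3j}, φ₀(a, i)), where on the left the group ℤ acts on L × ℤ by shifting the second coordinate, and on the right Γ₀ is the action of PJ₃ on H given by Γ₀(g, h) = g·h if g·h ∈ H and g·h·s₁₃ otherwise. -/

import Mathlib

/-- Generators of the cactus group `J₃`. -/
inductive CactusGen : Type
  | s12 | s23 | s13
  deriving DecidableEq

open FreeGroup in
/-- Relators of the cactus group `J₃`:
`s₁₂² = s₂₃² = s₁₃² = 1`, `s₁₂·s₁₃ = s₁₃·s₂₃`, `s₂₃·s₁₃ = s₁₃·s₁₂`. -/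
def cactusRels : Set (FreeGroup CactusGen) :=
  { of .s12 * of .s12,
    of .s23 * of .s23,
    of .s13 * of .s13,
    of .s12 * of .s13 * (of .s13 * of .s23)⁻¹,
    of .s23 * of .s13 * (of .s13 * of .s12)⁻¹ }

/-- The cactus group `J₃` as a presented group. -/
abbrev J3 : Type := PresentedGroup cactusRels

def s12 : J3 := PresentedGroup.of .s12
def s23 : J3 := PresentedGroup.of .s23
def s13 : J3 := PresentedGroup.of .s13

/-- The subgroup `H = J₃^{2}` of `J₃` generated by `s₁₂` and `s₂₃`. -/
def H : Subgroup J3 := Subgroup.closure {s12, s23}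

/-- The images of the generators in the symmetric group on three letters:
`s₁₂ ↦ (1 2)`, `s₂₃ ↦ (2 3)`, `s₁₃ ↦ (1 3)`. -/
def genPerm : CactusGen → Equiv.Perm (Fin 3)
  | .s12 => Equiv.swap 0 1
  | .s23 => Equiv.swap 1 2
  | .s13 => Equiv.swap 0 2

theorem cactusRels_hold : ∀ r ∈ cactusRels, FreeGroup.lift genPerm r = 1 := by
  intro r hr
  simp only [cactusRels, Set.mem_insert_iff, Set.mem_singleton_iff] at hr
  rcases hr with h | h | h | h | h <;> subst h <;>
    simp only [map_mul, map_inv, FreeGroup.lift_apply_of] <;> decide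

/-- The canonical projection `π : J₃ → S₃`; its kernel is the pure cactus group `PJ₃`. -/
def piJ3 : J3 →* Equiv.Perm (Fin 3) := PresentedGroup.toGroup cactusRels_hold

open Classical in
/-- The map `Γ₀ : (g, h) ↦ g·h` if `g·h ∈ H`, and `g·h·s₁₃` otherwise. -/
noncomputable def gamma (g h : J3) : J3 := if g * h ∈ H then g * h else g * h * s13

/-- The three labels `[213]`, `[123]`, `[132]`. -/
inductive L : Type
  | v213 | v123 | v132
  deriving DecidableEq

/-- The map `φ₀ : L × ℤ → J₃`. -/
def phi0 : L × ℤ → J3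
  | (.v213, k) =>
      if k % 2 = 0 then (s12 * s23) ^ ((3 * k) / 2) * s12 else (s12 * s23) ^ ((3 * k + 1) / 2)
  | (.v123, k) =>
      if k % 2 = 0 then (s12 * s23) ^ ((3 * k) / 2) else (s12 * s23) ^ ((3 * k - 1) / 2) * s12
  | (.v132, k) =>
      if k % 2 = 0 then (s12 * s23) ^ ((3 * k - 2) / 2) * s12 else (s12 * s23) ^ ((3 * k - 1) / 2)

/- ### Auxiliary lemmas -/

lemma rel_one' {r : FreeGroup CactusGen} (h : r ∈ cactusRels) :
    PresentedGroup.mk cactusRels r = 1 :=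
  (QuotientGroup.eq_one_iff r).2 (Subgroup.subset_normalClosure h)

lemma r12 : s12 * s12 = 1 := by
  have := rel_one' (show FreeGroup.of CactusGen.s12 * FreeGroup.of CactusGen.s12 ∈ cactusRels by
    simp [cactusRels])
  simpa [s12, PresentedGroup.of, map_mul] using this

lemma r23 : s23 * s23 = 1 := by
  have := rel_one' (show FreeGroup.of CactusGen.s23 * FreeGroup.of CactusGen.s23 ∈ cactusRels by
    simp [cactusRels])
  simpa [s23, PresentedGroup.of, map_mul] using this

lemma r13 : s13 * s13 = 1 := by
  have := rel_one' (show FreeGroup.of CactusGen.s13 * FreeGroup.of CactusGen.s13 ∈ cactusRels by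
    simp [cactusRels])
  simpa [s13, PresentedGroup.of, map_mul] using this

lemma s12_inv : s12⁻¹ = s12 := inv_eq_of_mul_eq_one_right r12
lemma s23_inv : s23⁻¹ = s23 := inv_eq_of_mul_eq_one_right r23
lemma s13_inv : s13⁻¹ = s13 := inv_eq_of_mul_eq_one_right r13

lemma rbraid1 : s12 * s13 = s13 * s23 := by
  have := rel_one' (show FreeGroup.of CactusGen.s12 * FreeGroup.of CactusGen.s13 *
      (FreeGroup.of CactusGen.s13 * FreeGroup.of CactusGen.s23)⁻¹ ∈ cactusRels by
    simp [cactusRels])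
  simp only [map_mul, map_inv] at this
  have h : (s12 * s13) * (s13 * s23)⁻¹ = 1 := by
    simpa [s12, s13, s23, PresentedGroup.of] using this
  exact mul_inv_eq_one.mp h

lemma rbraid2 : s23 * s13 = s13 * s12 := by
  have := rel_one' (show FreeGroup.of CactusGen.s23 * FreeGroup.of CactusGen.s13 *
      (FreeGroup.of CactusGen.s13 * FreeGroup.of CactusGen.s12)⁻¹ ∈ cactusRels by
    simp [cactusRels])
  simp only [map_mul, map_inv] at this
  have h : (s23 * s13) * (s13 * s12)⁻¹ = 1 := by
    simpa [s12, s13, s23, PresentedGroup.of] using this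
  exact mul_inv_eq_one.mp h

lemma s13_s12_s13 : s13 * s12 * s13 = s23 := by
  calc s13 * s12 * s13 = (s23 * s13) * s13 := by rw [rbraid2]
    _ = s23 * (s13 * s13) := mul_assoc _ _ _
    _ = s23 := by rw [r13, mul_one]

noncomputable abbrev tt : J3 := s12 * s23

lemma tt_inv : tt⁻¹ = s23 * s12 := by
  show (s12 * s23)⁻¹ = s23 * s12
  rw [mul_inv_rev, s12_inv, s23_inv]

lemma semi12 : SemiconjBy s12 tt tt⁻¹ := by
  show s12 * tt = tt⁻¹ * s12
  rw [tt_inv]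
  calc s12 * (s12 * s23) = (s12 * s12) * s23 := (mul_assoc _ _ _).symm
    _ = s23 := by rw [r12, one_mul]
    _ = s23 * (s12 * s12) := by rw [r12, mul_one]
    _ = s23 * s12 * s12 := (mul_assoc _ _ _).symm

lemma semi13 : SemiconjBy s13 tt tt⁻¹ := by
  show s13 * tt = tt⁻¹ * s13
  rw [tt_inv]
  calc s13 * (s12 * s23) = (s13 * s12) * s23 := (mul_assoc _ _ _).symm
    _ = (s23 * s13) * s23 := by rw [rbraid2]
    _ = s23 * (s13 * s23) := mul_assoc _ _ _
    _ = s23 * (s12 * s13) := by rw [rbraid1]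
    _ = s23 * s12 * s13 := (mul_assoc _ _ _).symm

lemma s12_zpow (n : ℤ) : s12 * tt ^ n = tt ^ (-n) * s12 := by
  have h : s12 * tt ^ n = (tt⁻¹) ^ n * s12 := semi12.zpow_right n
  rw [h, inv_zpow, ← zpow_neg]

lemma s13_zpow (n : ℤ) : s13 * tt ^ n = tt ^ (-n) * s13 := by
  have h : s13 * tt ^ n = (tt⁻¹) ^ n * s13 := semi13.zpow_right n
  rw [h, inv_zpow, ← zpow_neg]

lemma s12_mem : s12 ∈ H := Subgroup.subset_closure (by simp)
lemma s23_mem : s23 ∈ H := Subgroup.subset_closure (by simp)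
lemma tt_zpow_mem (n : ℤ) : tt ^ n ∈ H := H.zpow_mem (H.mul_mem s12_mem s23_mem) n

/- ### The sign character distinguishing `H` -/

def genSign : CactusGen → ℤˣ
  | .s12 => 1
  | .s23 => 1
  | .s13 => -1

theorem signRels_hold : ∀ r ∈ cactusRels, FreeGroup.lift genSign r = 1 := by
  intro r hr
  simp only [cactusRels, Set.mem_insert_iff, Set.mem_singleton_iff] at hr
  rcases hr with h | h | h | h | h <;> subst h <;>
    simp only [map_mul, map_inv, FreeGroup.lift_apply_of] <;> decide

noncomputable def chi : J3 →* ℤˣ := PresentedGroup.toGroup signRels_hold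

lemma chi_s12 : chi s12 = 1 := PresentedGroup.toGroup.of signRels_hold
lemma chi_s23 : chi s23 = 1 := PresentedGroup.toGroup.of signRels_hold
lemma chi_s13 : chi s13 = -1 := PresentedGroup.toGroup.of signRels_hold

lemma chi_of_mem {x : J3} (hx : x ∈ H) : chi x = 1 := by
  induction hx using Subgroup.closure_induction with
  | mem y hy =>
      rcases hy with h | h
      · rw [h]; exact chi_s12
      · rw [Set.mem_singleton_iff.mp h]; exact chi_s23
  | one => exact map_one chi
  | mul a b _ _ ha hb => rw [map_mul, ha, hb, one_mul]
  | inv a _ ha => rw [map_inv, ha]; rfl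

lemma not_mem_of_chi {x : J3} (hx : chi x = -1) : x ∉ H := by
  intro h
  rw [chi_of_mem h] at hx
  exact absurd hx (by decide)

lemma chi_tt_zpow (n : ℤ) : chi (tt ^ n) = 1 := chi_of_mem (tt_zpow_mem n)

/- ### Gamma computations -/

lemma gamma_even1 (q n : ℤ) : gamma (tt ^ q) (tt ^ n) = tt ^ (q + n) := by
  rw [gamma, if_pos, ← zpow_add]
  rw [← zpow_add]; exact tt_zpow_mem _

lemma gamma_even2 (q n : ℤ) : gamma (tt ^ q) (tt ^ n * s12) = tt ^ (q + n) * s12 := by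
  rw [gamma, if_pos, ← mul_assoc, ← zpow_add]
  rw [← mul_assoc, ← zpow_add]; exact H.mul_mem (tt_zpow_mem _) s12_mem

lemma gamma_odd1 (q n : ℤ) :
    gamma (tt ^ q * (s12 * s13)) (tt ^ n) = tt ^ (q + n) * s12 := by
  have hval : tt ^ q * (s12 * s13) * tt ^ n = tt ^ (q + n) * s12 * s13 := by
    calc tt ^ q * (s12 * s13) * tt ^ n = tt ^ q * s12 * (s13 * tt ^ n) := by group
      _ = tt ^ q * s12 * (tt ^ (-n) * s13) := by rw [s13_zpow]
      _ = tt ^ q * (s12 * tt ^ (-n)) * s13 := by group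
      _ = tt ^ q * (tt ^ n * s12) * s13 := by rw [s12_zpow, neg_neg]
      _ = tt ^ (q + n) * s12 * s13 := by group
  have hchi : chi (tt ^ q * (s12 * s13) * tt ^ n) = -1 := by
    rw [hval]
    simp only [map_mul, chi_tt_zpow, chi_s12, chi_s13]
    decide
  rw [gamma, if_neg (not_mem_of_chi hchi), hval]
  calc tt ^ (q + n) * s12 * s13 * s13 = tt ^ (q + n) * s12 * (s13 * s13) := by group
    _ = tt ^ (q + n) * s12 := by rw [r13, mul_one]

lemma gamma_odd2 (q n : ℤ) :
    gamma (tt ^ q * (s12 * s13)) (tt ^ n * s12) = tt ^ (q + n + 1) := by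
  have hval : tt ^ q * (s12 * s13) * (tt ^ n * s12) = tt ^ (q + n) * (s12 * s13 * s12) := by
    calc tt ^ q * (s12 * s13) * (tt ^ n * s12)
        = tt ^ q * s12 * (s13 * tt ^ n) * s12 := by group
      _ = tt ^ q * s12 * (tt ^ (-n) * s13) * s12 := by rw [s13_zpow]
      _ = tt ^ q * (s12 * tt ^ (-n)) * (s13 * s12) := by group
      _ = tt ^ q * (tt ^ n * s12) * (s13 * s12) := by rw [s12_zpow, neg_neg]
      _ = tt ^ (q + n) * (s12 * s13 * s12) := by group
  have hchi : chi (tt ^ q * (s12 * s13) * (tt ^ n * s12)) = -1 := by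
    rw [hval]
    simp only [map_mul, chi_tt_zpow, chi_s12, chi_s13]
    decide
  rw [gamma, if_neg (not_mem_of_chi hchi), hval]
  calc tt ^ (q + n) * (s12 * s13 * s12) * s13 = tt ^ (q + n) * (s12 * (s13 * s12 * s13)) := by
        group
    _ = tt ^ (q + n) * (s12 * s23) := by rw [s13_s12_s13]
    _ = tt ^ (q + n) * tt ^ (1 : ℤ) := by rw [zpow_one]
    _ = tt ^ (q + n + 1) := by rw [← zpow_add]

/- ### Powers of `s12 * s13` -/

lemma u_sq : (s12 * s13) * (s12 * s13) = tt := by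
  calc (s12 * s13) * (s12 * s13) = s12 * (s13 * s12 * s13) := by group
    _ = s12 * s23 := by rw [s13_s12_s13]

lemma u_zpow_even (m : ℤ) : (s12 * s13) ^ (2 * m) = tt ^ m := by
  rw [zpow_mul, show ((s12 * s13) ^ (2:ℤ)) = tt by rw [zpow_two]; exact u_sq]

lemma u_zpow_odd (m : ℤ) : (s12 * s13) ^ (2 * m + 1) = tt ^ m * (s12 * s13) := by
  rw [zpow_add, zpow_one, u_zpow_even]

/-- the bijection `φ₀` is equivariant: shifting the second coordinate by `j`
corresponds to acting by `(s₁₂·s₁₃)^{3j} ∈ PJ₃` via `Γ₀`. -/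
theorem phi0_equivariant :
    ∀ (j : ℤ) (a : L) (i : ℤ),
      phi0 (a, i + j) = gamma ((s12 * s13) ^ (3 * j)) (phi0 (a, i)) := by
  intro j a i
  rcases Int.even_or_odd j with ⟨d, hj⟩ | ⟨d, hj⟩ <;>
    rcases Int.even_or_odd i with ⟨c, hi⟩ | ⟨c, hi⟩ <;> subst hj <;> subst hi <;>
    cases a <;> simp only [phi0]
  -- j even, i even
  · rw [if_pos (show (c + c + (d + d)) % 2 = 0 by omega), if_pos (show (c + c) % 2 = 0 by omega),
      show (3 * (c + c + (d + d))) / 2 = 3 * d + 3 * c by omega,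
      show (3 * (c + c)) / 2 = 3 * c by omega,
      show (3 : ℤ) * (d + d) = 2 * (3 * d) by ring, u_zpow_even]
    exact (gamma_even2 (3 * d) (3 * c)).symm
  · rw [if_pos (show (c + c + (d + d)) % 2 = 0 by omega), if_pos (show (c + c) % 2 = 0 by omega),
      show (3 * (c + c + (d + d))) / 2 = 3 * d + 3 * c by omega,
      show (3 * (c + c)) / 2 = 3 * c by omega,
      show (3 : ℤ) * (d + d) = 2 * (3 * d) by ring, u_zpow_even]
    exact (gamma_even1 (3 * d) (3 * c)).symm
  · rw [if_pos (show (c + c + (d + d)) % 2 = 0 by omega), if_pos (show (c + c) % 2 = 0 by omega),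
      show (3 * (c + c + (d + d)) - 2) / 2 = 3 * d + (3 * c - 1) by omega,
      show (3 * (c + c) - 2) / 2 = 3 * c - 1 by omega,
      show (3 : ℤ) * (d + d) = 2 * (3 * d) by ring, u_zpow_even]
    exact (gamma_even2 (3 * d) (3 * c - 1)).symm
  -- j even, i odd
  · rw [if_neg (show ¬ (2 * c + 1 + (d + d)) % 2 = 0 by omega),
      if_neg (show ¬ (2 * c + 1) % 2 = 0 by omega),
      show (3 * (2 * c + 1 + (d + d)) + 1) / 2 = 3 * d + (3 * c + 2) by omega,
      show (3 * (2 * c + 1) + 1) / 2 = 3 * c + 2 by omega,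
      show (3 : ℤ) * (d + d) = 2 * (3 * d) by ring, u_zpow_even]
    exact (gamma_even1 (3 * d) (3 * c + 2)).symm
  · rw [if_neg (show ¬ (2 * c + 1 + (d + d)) % 2 = 0 by omega),
      if_neg (show ¬ (2 * c + 1) % 2 = 0 by omega),
      show (3 * (2 * c + 1 + (d + d)) - 1) / 2 = 3 * d + (3 * c + 1) by omega,
      show (3 * (2 * c + 1) - 1) / 2 = 3 * c + 1 by omega,
      show (3 : ℤ) * (d + d) = 2 * (3 * d) by ring, u_zpow_even]
    exact (gamma_even2 (3 * d) (3 * c + 1)).symm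
  · rw [if_neg (show ¬ (2 * c + 1 + (d + d)) % 2 = 0 by omega),
      if_neg (show ¬ (2 * c + 1) % 2 = 0 by omega),
      show (3 * (2 * c + 1 + (d + d)) - 1) / 2 = 3 * d + (3 * c + 1) by omega,
      show (3 * (2 * c + 1) - 1) / 2 = 3 * c + 1 by omega,
      show (3 : ℤ) * (d + d) = 2 * (3 * d) by ring, u_zpow_even]
    exact (gamma_even1 (3 * d) (3 * c + 1)).symm
  -- j odd, i even
  · rw [if_neg (show ¬ (c + c + (2 * d + 1)) % 2 = 0 by omega),
      if_pos (show (c + c) % 2 = 0 by omega),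
      show (3 * (c + c + (2 * d + 1)) + 1) / 2 = 3 * d + 1 + 3 * c + 1 by omega,
      show (3 * (c + c)) / 2 = 3 * c by omega,
      show (3 : ℤ) * (2 * d + 1) = 2 * (3 * d + 1) + 1 by ring, u_zpow_odd]
    exact (gamma_odd2 (3 * d + 1) (3 * c)).symm
  · rw [if_neg (show ¬ (c + c + (2 * d + 1)) % 2 = 0 by omega),
      if_pos (show (c + c) % 2 = 0 by omega),
      show (3 * (c + c + (2 * d + 1)) - 1) / 2 = 3 * d + 1 + 3 * c by omega,
      show (3 * (c + c)) / 2 = 3 * c by omega,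
      show (3 : ℤ) * (2 * d + 1) = 2 * (3 * d + 1) + 1 by ring, u_zpow_odd]
    exact (gamma_odd1 (3 * d + 1) (3 * c)).symm
  · rw [if_neg (show ¬ (c + c + (2 * d + 1)) % 2 = 0 by omega),
      if_pos (show (c + c) % 2 = 0 by omega),
      show (3 * (c + c + (2 * d + 1)) - 1) / 2 = 3 * d + 1 + (3 * c - 1) + 1 by omega,
      show (3 * (c + c) - 2) / 2 = 3 * c - 1 by omega,
      show (3 : ℤ) * (2 * d + 1) = 2 * (3 * d + 1) + 1 by ring, u_zpow_odd]
    exact (gamma_odd2 (3 * d + 1) (3 * c - 1)).symm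
  -- j odd, i odd
  · rw [if_pos (show (2 * c + 1 + (2 * d + 1)) % 2 = 0 by omega),
      if_neg (show ¬ (2 * c + 1) % 2 = 0 by omega),
      show (3 * (2 * c + 1 + (2 * d + 1))) / 2 = 3 * d + 1 + (3 * c + 2) by omega,
      show (3 * (2 * c + 1) + 1) / 2 = 3 * c + 2 by omega,
      show (3 : ℤ) * (2 * d + 1) = 2 * (3 * d + 1) + 1 by ring, u_zpow_odd]
    exact (gamma_odd1 (3 * d + 1) (3 * c + 2)).symm
  · rw [if_pos (show (2 * c + 1 + (2 * d + 1)) % 2 = 0 by omega),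
      if_neg (show ¬ (2 * c + 1) % 2 = 0 by omega),
      show (3 * (2 * c + 1 + (2 * d + 1))) / 2 = 3 * d + 1 + (3 * c + 1) + 1 by omega,
      show (3 * (2 * c + 1) - 1) / 2 = 3 * c + 1 by omega,
      show (3 : ℤ) * (2 * d + 1) = 2 * (3 * d + 1) + 1 by ring, u_zpow_odd]
    exact (gamma_odd2 (3 * d + 1) (3 * c + 1)).symm
  · rw [if_pos (show (2 * c + 1 + (2 * d + 1)) % 2 = 0 by omega),
      if_neg (show ¬ (2 * c + 1) % 2 = 0 by omega),
      show (3 * (2 * c + 1 + (2 * d + 1)) - 2) / 2 = 3 * d + 1 + (3 * c + 1) by omega,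
      show (3 * (2 * c + 1) - 1) / 2 = 3 * c + 1 by omega,
      show (3 : ℤ) * (2 * d + 1) = 2 * (3 * d + 1) + 1 by ring, u_zpow_odd]
    exact (gamma_odd1 (3 * d + 1) (3 * c + 1)).symm
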